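/- Let K be a field and let α, β, γ ∈ K. Let A : ℤ → K satisfy A h ≠ 0 for all h, and set e h = A(h−1)·A(h+1)/A(h)². Assume that for all h ∈ ℤ: e(h−1)·e(h)²·e(h+1) = α²·e(h) − β and (e(h−1) + e(h+1))·e(h)² = γ·e(h) − α². Let W : ℤ → K satisfy W(−m) = −W(m) for all m ∈ ℤ, W(0) = 0, W(m) ≠ 0 for all m ≥ 1, W(1) = 1, W(2) = α, W(3) = β, W(4) = αβγ − α⁵, and W(m−2)·W(m+2) = α²·W(m−1)·W(m+1) − β·W(m)² for all m ≥ 3. Then for all h ∈ ℤ and all m ∈ ℤ: W(1)²·A(h−m)·A(h+m) = W(m)²·A(h−1)·A(h+1) − W(m−1)·W(m+1)·A(h)². -/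

import Mathlib

theorem somos_even_gap_from_elliptic {K : Type*} [Field K] (α β γ : K)
    (A : ℤ → K) (hA : ∀ h : ℤ, A h ≠ 0)
    (e : ℤ → K) (he : ∀ h : ℤ, e h = A (h - 1) * A (h + 1) / (A h) ^ 2)
    (he1 : ∀ h : ℤ, e (h - 1) * (e h) ^ 2 * e (h + 1) = α ^ 2 * e h - β)
    (he2 : ∀ h : ℤ, (e (h - 1) + e (h + 1)) * (e h) ^ 2 = γ * e h - α ^ 2)
    (W : ℤ → K)
    (hWneg : ∀ m : ℤ, W (-m) = -W m)
    (hW0 : W 0 = 0)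
    (hWne : ∀ m : ℤ, 1 ≤ m → W m ≠ 0)
    (hW1 : W 1 = 1) (hW2 : W 2 = α) (hW3 : W 3 = β)
    (hW4 : W 4 = α * β * γ - α ^ 5)
    (hWrec : ∀ m : ℤ, 3 ≤ m →
      W (m - 2) * W (m + 2) = α ^ 2 * W (m - 1) * W (m + 1) - β * (W m) ^ 2) :
    ∀ h m : ℤ,
      (W 1) ^ 2 * (A (h - m) * A (h + m)) =
        (W m) ^ 2 * (A (h - 1) * A (h + 1)) - W (m - 1) * W (m + 1) * (A h) ^ 2 := by
  -- Somos 4 relation for A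
  have hS : ∀ h : ℤ, A (h-2) * A (h+2) = α^2 * (A (h-1) * A (h+1)) - β * (A h)^2 := by
    intro h
    have H := he1 h
    rw [he (h-1), he h, he (h+1)] at H
    rw [show h-1-1 = h-2 from by ring, show h-1+1 = h from by ring,
        show h+1-1 = h from by ring, show h+1+1 = h+2 from by ring] at H
    field_simp [hA (h-1), hA h, hA (h+1)] at H
    have nz : A (h-1)^2 * A (h+1)^2 * (A h)^4 ≠ 0 :=
      mul_ne_zero (mul_ne_zero (pow_ne_zero _ (hA _)) (pow_ne_zero _ (hA _))) (pow_ne_zero _ (hA _))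
    apply mul_right_cancel₀ nz
    linear_combination (A (h-1)^2 * A (h+1)^2 * (A h)^4) * H
  -- cubic relation for A
  have hC : ∀ h : ℤ, A (h-2) * A (h+1)^2 + A (h+2) * A (h-1)^2
      = γ * (A (h-1) * A h * A (h+1)) - α^2 * (A h)^3 := by
    intro h
    have H := he2 h
    rw [he (h-1), he h, he (h+1)] at H
    rw [show h-1-1 = h-2 from by ring, show h-1+1 = h from by ring,
        show h+1-1 = h from by ring, show h+1+1 = h+2 from by ring] at H
    field_simp [hA (h-1), hA h, hA (h+1)] at H
    have nz : A (h-1)^2 * A (h+1)^2 * (A h)^3 ≠ 0 :=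
      mul_ne_zero (mul_ne_zero (pow_ne_zero _ (hA _)) (pow_ne_zero _ (hA _))) (pow_ne_zero _ (hA _))
    apply mul_right_cancel₀ nz
    linear_combination (A (h-1)^2 * A (h+1)^2 * (A h)^3) * H
  -- recurrence extended to m = 2
  have hrec2 : ∀ m : ℤ, 2 ≤ m →
      W (m-2) * W (m+2) = α^2 * (W (m-1) * W (m+1)) - β * (W m)^2 := by
    intro m hm
    rcases eq_or_lt_of_le hm with h | h
    · rw [← h, show (2:ℤ)-2 = 0 from by norm_num, show (2:ℤ)+2 = 4 from by norm_num,
        show (2:ℤ)-1 = 1 from by norm_num, show (2:ℤ)+1 = 3 from by norm_num,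
        hW0, hW1, hW2, hW3]
      ring
    · linear_combination hWrec m h
  -- the invariant relation D for W
  have hD : ∀ m : ℤ, 1 ≤ m →
      W (m-1)^2 * W (m+2)^2 + α^2 * (W (m-1) * W (m+1)^3 + (W m)^3 * W (m+2))
        = β * ((W m)^2 * W (m+1)^2) + γ * (W (m-1) * W m * W (m+1) * W (m+2)) := by
    refine Int.le_induction ?_ ?_
    · rw [show (1:ℤ)-1 = 0 from by norm_num, show (1:ℤ)+2 = 3 from by norm_num,
        show (1:ℤ)+1 = 2 from by norm_num, hW0, hW1, hW2, hW3]
      ring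
    · intro n hn ih
      rcases eq_or_lt_of_le hn with h | h
      · rw [← h, show (1:ℤ)+1-1 = 1 from by norm_num, show (1:ℤ)+1+2 = 4 from by norm_num,
          show (1:ℤ)+1+1 = 3 from by norm_num, show (1:ℤ)+1 = 2 from by norm_num,
          hW1, hW2, hW3, hW4]
        ring
      · have hn2 : 2 ≤ n := h
        have hr := hrec2 (n+1) (by omega)
        rw [show n+1-2 = n-1 from by ring, show n+1+2 = n+3 from by ring,
            show n+1-1 = n from by ring, show n+1+1 = n+2 from by ring] at hr
        rw [show n+1-1 = n from by ring, show n+1+2 = n+3 from by ring,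
            show n+1+1 = n+2 from by ring]
        have h2 : W (n-1) ≠ 0 := hWne _ (by omega)
        apply mul_left_cancel₀ (pow_ne_zero 2 h2)
        linear_combination (α^2 * (W n) * (W (n+2)) - β * (W (n+1))^2) * ih +
          (W (n-1) * (W n)^2 * W (n+3) - γ * (W (n-1) * W n * W (n+1) * W (n+2))
            - β * (W n)^2 * (W (n+1))^2 + α^2 * (W n)^3 * W (n+2)
            + α^2 * W (n-1) * (W (n+1))^3) * hr
  -- the cubic relation I for W
  have hI : ∀ m : ℤ, 2 ≤ m →
      W (m-2) * W (m+1)^2 + W (m-1)^2 * W (m+2)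
        = γ * (W (m-1) * W m * W (m+1)) - α^2 * (W m)^3 := by
    intro m hm
    rcases eq_or_lt_of_le hm with h | h
    · rw [← h, show (2:ℤ)-2 = 0 from by norm_num, show (2:ℤ)+1 = 3 from by norm_num,
        show (2:ℤ)-1 = 1 from by norm_num, show (2:ℤ)+2 = 4 from by norm_num,
        hW0, hW1, hW2, hW3, hW4]
      ring
    · have h1 : W (m-2) ≠ 0 := hWne _ (by omega)
      have hDm := hD (m-1) (by omega)
      rw [show m-1-1 = m-2 from by ring, show m-1+2 = m+1 from by ring,
          show m-1+1 = m from by ring] at hDm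
      have hr := hrec2 m hm
      apply mul_left_cancel₀ h1
      linear_combination hDm + (W (m-1))^2 * hr
  -- main induction step
  have step : ∀ m : ℤ, 2 ≤ m →
      (∀ h : ℤ, A (h-(m-1)) * A (h+(m-1))
        = (W (m-1))^2 * (A (h-1) * A (h+1)) - W (m-2) * W m * (A h)^2) →
      (∀ h : ℤ, A (h-m) * A (h+m)
        = (W m)^2 * (A (h-1) * A (h+1)) - W (m-1) * W (m+1) * (A h)^2) →
      ∀ h : ℤ, A (h-(m+1)) * A (h+(m+1))
        = (W (m+1))^2 * (A (h-1) * A (h+1)) - W m * W (m+2) * (A h)^2 := by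
    intro m hm Hm1 Hm h
    have hprod : (A (h-(m+1)) * A (h+(m+1))) * (A (h-(m-1)) * A (h+(m-1)))
        = (A ((h-1)-m) * A ((h-1)+m)) * (A ((h+1)-m) * A ((h+1)+m)) := by
      rw [show h-(m+1) = (h-1)-m from by ring, show h+(m+1) = (h+1)+m from by ring,
          show h-(m-1) = (h+1)-m from by ring, show h+(m-1) = (h-1)+m from by ring]
      ring
    rw [Hm (h-1), Hm (h+1)] at hprod
    rw [show h-1-1 = h-2 from by ring, show h-1+1 = h from by ring,
        show h+1-1 = h from by ring, show h+1+1 = h+2 from by ring] at hprod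
    have nz : A (h-(m-1)) * A (h+(m-1)) ≠ 0 := mul_ne_zero (hA _) (hA _)
    rw [Hm1 h] at hprod nz
    apply mul_right_cancel₀ nz
    rw [hprod]
    linear_combination ((W m)^4 * (A h)^2) * hS h
      - (W (m-1) * (W m)^2 * W (m+1) * (A h)) * hC h
      - ((W m)^2 * (A h)^4) * hrec2 m hm
      + (W m * A (h-1) * (A h)^2 * A (h+1)) * hI m hm
  -- the pair induction
  have pair : ∀ m : ℤ, 0 ≤ m →
      (∀ h : ℤ, A (h-m) * A (h+m)
        = (W m)^2 * (A (h-1) * A (h+1)) - W (m-1) * W (m+1) * (A h)^2) ∧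
      (∀ h : ℤ, A (h-(m+1)) * A (h+(m+1))
        = (W (m+1))^2 * (A (h-1) * A (h+1)) - W m * W (m+2) * (A h)^2) := by
    refine Int.le_induction ?_ ?_
    · constructor
      · intro h
        have wm1 : W (-1) = -1 := by rw [hWneg 1, hW1]
        rw [sub_zero, add_zero, show (0:ℤ)-1 = -1 from by norm_num,
          show (0:ℤ)+1 = 1 from by norm_num, hW0, hW1, wm1]
        ring
      · intro h
        rw [show (0:ℤ)+2 = 2 from by norm_num, show (0:ℤ)+1 = 1 from by norm_num,
          hW0, hW1]
        ring
    · intro n hn ih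
      have H2' : ∀ h : ℤ, A (h-(n+1)) * A (h+(n+1))
          = (W (n+1))^2 * (A (h-1) * A (h+1)) - W (n+1-1) * W (n+1+1) * (A h)^2 := by
        intro h
        rw [show n+1-1 = n from by ring, show n+1+1 = n+2 from by ring]
        exact ih.2 h
      refine ⟨H2', ?_⟩
      rcases eq_or_lt_of_le hn with h0 | h0
      · -- n = 0 : the m = 2 case from the Somos relation
        rw [← h0]
        intro h
        rw [show (0:ℤ)+1+1 = 2 from by norm_num, show (0:ℤ)+1+2 = 3 from by norm_num,
          show (0:ℤ)+1 = 1 from by norm_num, hW1, hW2, hW3]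
        linear_combination hS h
      · have hn1 : 1 ≤ n := h0
        have H1' : ∀ h : ℤ, A (h-(n+1-1)) * A (h+(n+1-1))
            = (W (n+1-1))^2 * (A (h-1) * A (h+1)) - W (n+1-2) * W (n+1) * (A h)^2 := by
          intro h
          rw [show n+1-1 = n from by ring, show n+1-2 = n-1 from by ring]
          exact ih.1 h
        exact step (n+1) (by omega) H1' H2'
  have key : ∀ m : ℤ, 0 ≤ m → ∀ h : ℤ,
      A (h-m) * A (h+m) = (W m)^2 * (A (h-1) * A (h+1)) - W (m-1) * W (m+1) * (A h)^2 :=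
    fun m hm => (pair m hm).1
  intro h m
  rw [hW1, one_pow, one_mul]
  rcases le_or_gt 0 m with hm | hm
  · exact key m hm h
  · have H := key (-m) (by omega) h
    rw [show h-(-m) = h+m from by ring, show h+(-m) = h-m from by ring] at H
    rw [show -m-1 = -(m+1) from by ring, show -m+1 = -(m-1) from by ring,
        hWneg m, hWneg (m+1), hWneg (m-1)] at H
    linear_combination H
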